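/- For any fixed 0 < c < 1, the function η(c,x) := ln(1 − c·x)/ln(1 − x) is strictly decreasing in x on (0,1). -/

import Mathlib

theorem stmt_12 (c : ℝ) (hc0 : 0 < c) (hc1 : c < 1) :
    StrictAntiOn (fun x : ℝ => Real.log (1 - c * x) / Real.log (1 - x))
      (Set.Ioo 0 1) := by
  apply strictAntiOn_of_deriv_neg (convex_Ioo (0:ℝ) 1)
  · apply ContinuousOn.div
    · apply ContinuousOn.log
      · exact (continuous_const.sub (continuous_const.mul continuous_id)).continuousOn
      · intro x hx
        obtain ⟨hx0, hx1⟩ := hx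
        nlinarith
    · apply ContinuousOn.log
      · exact (continuous_const.sub continuous_id).continuousOn
      · intro x hx
        obtain ⟨hx0, hx1⟩ := hx
        linarith
    · intro x hx
      obtain ⟨hx0, hx1⟩ := hx
      exact (Real.log_neg (by linarith) (by linarith)).ne
  · intro x hx
    rw [interior_Ioo] at hx
    obtain ⟨hx0, hx1⟩ := hx
    have h1x : (0:ℝ) < 1 - x := by linarith
    have h1cx : (0:ℝ) < 1 - c * x := by nlinarith
    have hlx : Real.log (1 - x) < 0 := Real.log_neg h1x (by linarith)
    have hlcx : Real.log (1 - c * x) < 0 := Real.log_neg h1cx (by nlinarith)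
    have hu : HasDerivAt (fun x : ℝ => Real.log (1 - c * x)) (-c / (1 - c * x)) x := by
      have h1 : HasDerivAt (fun x : ℝ => 1 - c * x) (-c) x := by
        simpa using ((hasDerivAt_id x).const_mul c).const_sub 1
      exact h1.log h1cx.ne'
    have hv : HasDerivAt (fun x : ℝ => Real.log (1 - x)) (-1 / (1 - x)) x := by
      have h1 : HasDerivAt (fun x : ℝ => 1 - x) (-1) x := by
        simpa using (hasDerivAt_id x).const_sub 1
      exact h1.log h1x.ne'
    have hf := hu.div hv hlx.ne
    rw [HasDerivAt.deriv (f := fun x : ℝ => Real.log (1 - c * x) / Real.log (1 - x)) hf]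
    apply div_neg_of_neg_of_pos
    · -- key inequality from strict convexity of t ↦ t * log t
      have hne : (1 : ℝ) - x ≠ 1 := by intro h; apply hx0.ne'; linarith
      have hconv := Real.strictConvexOn_mul_log.2
        (show (1:ℝ) - x ∈ Set.Ici (0:ℝ) from by simp [h1x.le])
        (show (1:ℝ) ∈ Set.Ici (0:ℝ) from by norm_num) hne
        hc0 (by linarith : (0:ℝ) < 1 - c) (by ring)
      simp only [smul_eq_mul, Real.log_one, mul_one, mul_zero, add_zero] at hconv
      have hsum : c * (1 - x) + (1 - c) = 1 - c * x := by ring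
      rw [hsum] at hconv
      -- hconv : (1 - c*x) * log (1 - c*x) < c * ((1-x) * log (1-x))
      have heq : -c / (1 - c * x) * Real.log (1 - x) -
          Real.log (1 - c * x) * (-1 / (1 - x)) =
          ((1 - c * x) * Real.log (1 - c * x) - c * ((1 - x) * Real.log (1 - x))) /
            ((1 - c * x) * (1 - x)) := by
        field_simp
        ring
      rw [heq]
      exact div_neg_of_neg_of_pos (by linarith) (mul_pos h1cx h1x)
    · exact pow_pos (abs_pos.mpr hlx.ne) 2 |>.trans_le (by rw [sq_abs])
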